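/- arXiv:1809.04367 — 4 statements merged into one kernel-verified Lean document; each statement's English description precedes it below -/
import Mathlib

section
/- Let E be a countable set and p : E × E → [0,1] a transition probability, i.e. Σ_{y∈E} p(x,y) = 1 for every x ∈ E. Fix 0 < a < b < c < d and let λ, μ : E → ℝ satisfy a ≤ λ(x) ≤ b and c ≤ μ(x) ≤ d for all x ∈ E. Define the bounded generators (L_λ f)(x) = λ(x) Σ_{y∈E} p(x,y)(f(y) − f(x)) and (L_μ f)(x) = μ(x) Σ_{y∈E} p(x,y)(f(y) − f(x)) on the Banach space of bounded functions E → ℝ, and set Λ = sup_{x∈E} μ(x)/λ(x) (finite since Λ ≤ d/a). Then for every subset A ⊆ E, every z ∈ E and every t ≥ 0: ∫₀ᵗ (e^{sL_μ} 𝟙_A)(z) ds ≤ ∫₀^{Λt} (e^{sL_λ} 𝟙_A)(z) ds; that is, the expected local time of A up to time t for the Markov chain with jump chain p and holding rates μ is at most the expected local time of A up to time Λt for the chain with the same jump chain and holding rates λ. -/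
set_option synthInstance.maxHeartbeats 400000
set_option maxHeartbeats 1000000


open MeasureTheory Filter
open scoped BoundedContinuousFunction NNReal

/-- The operator exponential `e^{tA}` of a bounded operator `A`, applied to `f`:
`e^{tA} f = ∑_k (t^k / k!) A^k f`. -/
noncomputable def expApply {E : Type*} [NormedAddCommGroup E] [NormedSpace ℝ E]
    (A : E →L[ℝ] E) (t : ℝ) (f : E) : E :=
  ∑' k : ℕ, (t ^ k / (k.factorial : ℝ)) • ((A ^ k) f)

section helpers

variable {F : Type*} [NormedAddCommGroup F] [NormedSpace ℝ F] [CompleteSpace F]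

lemma expApply_eq (A : F →L[ℝ] F) (t : ℝ) (f : F) :
    expApply A t f = NormedSpace.exp (t • A) f := by
  rw [NormedSpace.exp_eq_tsum ℝ]
  have hs := NormedSpace.expSeries_summable' (𝕂 := ℝ) (t • A)
  have := (ContinuousLinearMap.apply ℝ F f).map_tsum hs
  simp only [ContinuousLinearMap.apply_apply] at this
  rw [expApply, this]
  congr 1
  ext n
  rw [smul_pow, ContinuousLinearMap.smul_apply, ContinuousLinearMap.smul_apply, smul_smul,
    div_eq_mul_inv, mul_comm]

lemma exp_apply_summable (A : F →L[ℝ] F) (t : ℝ) (f : F) :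
    Summable (fun n : ℕ => (t ^ n / (n.factorial : ℝ)) • ((A ^ n) f)) := by
  have hs := NormedSpace.expSeries_summable' (𝕂 := ℝ) (t • A)
  have := hs.map (ContinuousLinearMap.apply ℝ F f) (ContinuousLinearMap.apply ℝ F f).continuous
  simp only [Function.comp_def, ContinuousLinearMap.apply_apply] at this
  convert this using 2 with n
  rw [smul_pow, ContinuousLinearMap.smul_apply, ContinuousLinearMap.smul_apply, smul_smul,
    div_eq_mul_inv, mul_comm]

end helpers

section bcf

variable {E : Type} [TopologicalSpace E] [DiscreteTopology E]

lemma bcf_tsum_apply {F : ℕ → (E →ᵇ ℝ)} (hF : Summable F) (x : E) :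
    (∑' n, F n) x = ∑' n, F n x := by
  have := (BoundedContinuousFunction.evalCLM ℝ x).map_tsum hF
  exact this

/-- Pointwise formula for the exponential applied to a function. -/
lemma expApply_apply (A : (E →ᵇ ℝ) →L[ℝ] (E →ᵇ ℝ)) (t : ℝ) (f : E →ᵇ ℝ) (x : E) :
    expApply A t f x
      = ∑' n : ℕ, (t ^ n / (n.factorial : ℝ)) * ((A ^ n) f x) := by
  rw [expApply, bcf_tsum_apply (exp_apply_summable A t f)]
  simp only [BoundedContinuousFunction.coe_smul, Pi.smul_apply, smul_eq_mul]

lemma exp_apply_apply_summable (A : (E →ᵇ ℝ) →L[ℝ] (E →ᵇ ℝ)) (t : ℝ) (f : E →ᵇ ℝ) (x : E) :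
    Summable (fun n : ℕ => (t ^ n / (n.factorial : ℝ)) * ((A ^ n) f x)) := by
  have := (exp_apply_summable A t f).map (BoundedContinuousFunction.evalCLM (𝕜 := ℝ) x)
    (BoundedContinuousFunction.evalCLM (𝕜 := ℝ) x).continuous
  simpa [Function.comp_def] using this

end bcf

section general2

variable {F : Type*} [NormedAddCommGroup F] [NormedSpace ℝ F] [CompleteSpace F]

lemma expApply_zero (A : F →L[ℝ] F) (f : F) : expApply A 0 f = f := by
  rw [expApply_eq, zero_smul, NormedSpace.exp_zero, ContinuousLinearMap.one_apply]

lemma expApply_continuous (A : F →L[ℝ] F) (f : F) : Continuous fun s : ℝ => expApply A s f := by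
  simp only [expApply_eq]
  exact (ContinuousLinearMap.apply ℝ F f).continuous.comp
    ((continuous_iff_continuousAt.2 fun x =>
      (NormedSpace.exp_analytic (𝕂 := ℝ) x).continuousAt).comp (continuous_id.smul continuous_const))

lemma hasDerivAt_expApply (A : F →L[ℝ] F) (f : F) (s : ℝ) :
    HasDerivAt (fun u : ℝ => expApply A u f) (A (expApply A s f)) s := by
  simp only [expApply_eq]
  have h1 := hasDerivAt_exp_smul_const' (𝕂 := ℝ) A s
  have := ((ContinuousLinearMap.apply ℝ F f).hasFDerivAt.comp_hasDerivAt s h1)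
  simpa [Function.comp_def] using this

lemma expApply_map_sub (A : F →L[ℝ] F) (s : ℝ) (f g : F) :
    expApply A s (f - g) = expApply A s f - expApply A s g := by
  simp only [expApply_eq]; exact map_sub _ _ _

lemma expApply_map_zero (A : F →L[ℝ] F) (s : ℝ) : expApply A s 0 = 0 := by
  simp only [expApply_eq]; exact map_zero _

/-- Derivative of `s ↦ e^{(t-s)A} w(s)`. -/
lemma hasDerivAt_expApply_comp (A : F →L[ℝ] F) (t : ℝ) {w : ℝ → F} {w' : F} {s : ℝ}
    (hw : HasDerivAt w w' s) :
    HasDerivAt (fun u : ℝ => expApply A (t - u) (w u))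
      (expApply A (t - s) w' - expApply A (t - s) (A (w s))) s := by
  simp only [expApply_eq]
  have h2 : HasDerivAt (fun u : ℝ => t - u) (-1 : ℝ) s := by
    simpa using (hasDerivAt_id' s).const_sub t
  have h1 : HasDerivAt (fun u : ℝ => NormedSpace.exp (u • A)) 
      (A * NormedSpace.exp ((t - s) • A)) (t - s) :=
    hasDerivAt_exp_smul_const' (𝕂 := ℝ) A (t - s)
  have hc : HasDerivAt (fun u : ℝ => NormedSpace.exp ((t - u) • A))
      ((-1 : ℝ) • (A * NormedSpace.exp ((t - s) • A))) s := h1.scomp s h2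
  have := hc.clm_apply hw
  have hcomm : A * NormedSpace.exp ((t - s) • A) = NormedSpace.exp ((t - s) • A) * A :=
    ((Commute.refl A).smul_right (t - s)).exp_right
  convert this using 1
  rw [hcomm]
  simp [ContinuousLinearMap.mul_apply, sub_eq_neg_add]

lemma expApply_intervalIntegrable (A : F →L[ℝ] F) (f : F) (a b : ℝ) :
    IntervalIntegrable (fun s => expApply A s f) MeasureTheory.volume a b :=
  (expApply_continuous A f).intervalIntegrable a b

/-- FTC1 for the orbit map. -/
lemma hasDerivAt_integral_expApply (A : F →L[ℝ] F) (f : F) (s : ℝ) :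
    HasDerivAt (fun u : ℝ => ∫ r in (0:ℝ)..u, expApply A r f) (expApply A s f) s := by
  exact ((expApply_continuous A f).integral_hasStrictDerivAt 0 s).hasDerivAt

/-- The generator applied to the integrated orbit. -/
lemma generator_integral_expApply (A : F →L[ℝ] F) (f : F) (s : ℝ) :
    A (∫ r in (0:ℝ)..s, expApply A r f) = expApply A s f - f := by
  rw [← ContinuousLinearMap.intervalIntegral_comp_comm A (expApply_intervalIntegrable A f 0 s)]
  have h := intervalIntegral.integral_eq_sub_of_hasDerivAt
    (f := fun u : ℝ => expApply A u f) (f' := fun u : ℝ => A (expApply A u f))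
    (a := (0:ℝ)) (b := s)
    (fun r _ => hasDerivAt_expApply A f r)
    ((A.continuous.comp (expApply_continuous A f)).intervalIntegrable 0 s)
  rw [h]
  simp only [expApply_zero]

lemma expApply_smul_one (L : F →L[ℝ] F) (d : ℝ) (s : ℝ) (f : F) :
    expApply L s f
      = Real.exp (-(s * d)) • expApply (L + d • (1 : F →L[ℝ] F)) s f := by
  simp only [expApply_eq]
  have hsplit : s • L = (-(s * d)) • (1 : F →L[ℝ] F) + s • (L + d • (1 : F →L[ℝ] F)) := by
    simp only [smul_add, smul_smul, neg_smul]
    module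
  have hcomm : Commute ((-(s * d)) • (1 : F →L[ℝ] F)) (s • (L + d • (1 : F →L[ℝ] F)))  :=
    ((Commute.one_left _).smul_left _).smul_right _
  rw [hsplit, NormedSpace.exp_add_of_commute_of_mem_ball (𝕂 := ℝ) hcomm
    ((NormedSpace.expSeries_radius_eq_top ℝ (F →L[ℝ] F)).symm ▸ edist_lt_top _ _)
    ((NormedSpace.expSeries_radius_eq_top ℝ (F →L[ℝ] F)).symm ▸ edist_lt_top _ _)]
  have hone : NormedSpace.exp ((-(s * d)) • (1 : F →L[ℝ] F))
      = Real.exp (-(s * d)) • (1 : F →L[ℝ] F) := by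
    rw [← Algebra.algebraMap_eq_smul_one, ← NormedSpace.algebraMap_exp_comm,
      Algebra.algebraMap_eq_smul_one, Real.exp_eq_exp_ℝ]
  rw [hone]
  simp [ContinuousLinearMap.mul_apply]

end general2

section markov

variable {E : Type} [TopologicalSpace E] [DiscreteTopology E]
variable {p : E → E → ℝ}

lemma summable_p_mul (hp0 : ∀ x y : E, 0 ≤ p x y) (hp1 : ∀ x : E, HasSum (p x) 1)
    (f : E →ᵇ ℝ) (x : E) : Summable fun y => p x y * f y := by
  apply Summable.of_norm_bounded (g := fun y => p x y * ‖f‖)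
    (((hp1 x).summable).mul_right ‖f‖)
  intro y
  rw [norm_mul, Real.norm_of_nonneg (hp0 x y)]
  exact mul_le_mul_of_nonneg_left (f.norm_coe_le_norm y) (hp0 x y)

lemma tsum_jump (hp0 : ∀ x y : E, 0 ≤ p x y) (hp1 : ∀ x : E, HasSum (p x) 1)
    (f : E →ᵇ ℝ) (x : E) :
    ∑' y : E, p x y * (f y - f x) = (∑' y : E, p x y * f y) - f x := by
  have h1 := summable_p_mul hp0 hp1 f x
  have h2 : Summable (fun y : E => p x y * f x) := ((hp1 x).summable).mul_right _
  calc ∑' y : E, p x y * (f y - f x)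
      = ∑' y : E, (p x y * f y - p x y * f x) := by simp_rw [mul_sub]
    _ = (∑' y : E, p x y * f y) - ∑' y : E, p x y * f x := Summable.tsum_sub h1 h2
    _ = (∑' y : E, p x y * f y) - f x := by
        rw [tsum_mul_right, (hp1 x).tsum_eq, one_mul]

lemma shift_apply_nonneg (hp0 : ∀ x y : E, 0 ≤ p x y) (hp1 : ∀ x : E, HasSum (p x) 1)
    {L : (E →ᵇ ℝ) →L[ℝ] (E →ᵇ ℝ)} {ρ : E → ℝ} {d : ℝ}
    (hL : ∀ f : E →ᵇ ℝ, ∀ x : E, L f x = ρ x * ∑' y : E, p x y * (f y - f x))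
    (hρ0 : ∀ x, 0 ≤ ρ x) (hρd : ∀ x, ρ x ≤ d)
    (f : E →ᵇ ℝ) (hf : ∀ x, 0 ≤ f x) (x : E) :
    0 ≤ ((L + d • (1 : (E →ᵇ ℝ) →L[ℝ] (E →ᵇ ℝ))) f) x := by
  have : ((L + d • (1 : (E →ᵇ ℝ) →L[ℝ] (E →ᵇ ℝ))) f) x = L f x + d * f x := by
    simp [ContinuousLinearMap.add_apply, ContinuousLinearMap.smul_apply,
      ContinuousLinearMap.one_apply]
  rw [this, hL, tsum_jump hp0 hp1 f x, mul_sub]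
  have h1 : 0 ≤ ρ x * ∑' y : E, p x y * f y :=
    mul_nonneg (hρ0 x) (tsum_nonneg fun y => mul_nonneg (hp0 x y) (hf y))
  nlinarith [hf x, hρ0 x, hρd x]

lemma shift_pow_apply_nonneg (hp0 : ∀ x y : E, 0 ≤ p x y) (hp1 : ∀ x : E, HasSum (p x) 1)
    {L : (E →ᵇ ℝ) →L[ℝ] (E →ᵇ ℝ)} {ρ : E → ℝ} {d : ℝ}
    (hL : ∀ f : E →ᵇ ℝ, ∀ x : E, L f x = ρ x * ∑' y : E, p x y * (f y - f x))
    (hρ0 : ∀ x, 0 ≤ ρ x) (hρd : ∀ x, ρ x ≤ d) (n : ℕ)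
    (f : E →ᵇ ℝ) (hf : ∀ x, 0 ≤ f x) (x : E) :
    0 ≤ (((L + d • (1 : (E →ᵇ ℝ) →L[ℝ] (E →ᵇ ℝ))) ^ n) f) x := by
  induction n generalizing f with
  | zero => simpa using hf x
  | succ n ih =>
    rw [pow_succ, ContinuousLinearMap.mul_apply]
    exact ih _ (fun y => shift_apply_nonneg hp0 hp1 hL hρ0 hρd f hf y)

/-- Positivity of the semigroup. -/
lemma expApply_pointwise_nonneg (hp0 : ∀ x y : E, 0 ≤ p x y) (hp1 : ∀ x : E, HasSum (p x) 1)
    {L : (E →ᵇ ℝ) →L[ℝ] (E →ᵇ ℝ)} {ρ : E → ℝ} {d : ℝ}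
    (hL : ∀ f : E →ᵇ ℝ, ∀ x : E, L f x = ρ x * ∑' y : E, p x y * (f y - f x))
    (hρ0 : ∀ x, 0 ≤ ρ x) (hρd : ∀ x, ρ x ≤ d) {s : ℝ} (hs : 0 ≤ s)
    (f : E →ᵇ ℝ) (hf : ∀ x, 0 ≤ f x) (x : E) :
    0 ≤ expApply L s f x := by
  rw [expApply_smul_one L d s f]
  have h1 : 0 ≤ expApply (L + d • (1 : (E →ᵇ ℝ) →L[ℝ] (E →ᵇ ℝ))) s f x := by
    rw [expApply_apply]
    apply tsum_nonneg
    intro n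
    exact mul_nonneg (div_nonneg (pow_nonneg hs n) (Nat.cast_nonneg _))
      (shift_pow_apply_nonneg hp0 hp1 hL hρ0 hρd n f hf x)
  simpa using mul_nonneg (Real.exp_nonneg _) h1

lemma expApply_one_eq_one {L : (E →ᵇ ℝ) →L[ℝ] (E →ᵇ ℝ)} {ρ : E → ℝ}
    (hL : ∀ f : E →ᵇ ℝ, ∀ x : E, L f x = ρ x * ∑' y : E, p x y * (f y - f x))
    (hp1 : ∀ x : E, HasSum (p x) 1) (s : ℝ) (x : E) :
    expApply L s (1 : E →ᵇ ℝ) x = 1 := by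
  have hone : L (1 : E →ᵇ ℝ) = 0 := by
    ext y
    rw [hL]
    simp
  rw [expApply_apply]
  rw [tsum_eq_single 0 ?_]
  · simp
  · intro n hn
    obtain ⟨m, rfl⟩ := Nat.exists_eq_succ_of_ne_zero hn
    have : (L ^ (m + 1)) (1 : E →ᵇ ℝ) = 0 := by
      rw [pow_succ, ContinuousLinearMap.mul_apply, hone, map_zero]
    rw [this]
    simp

end markov

open Classical

/-- **Monotonicity of local times under a speed-up of the holding rates**
(Proposition 3.3). For two continuous-time Markov chains with the same jump chain `p`
and holding rates `λ ∈ [a,b]` resp. `μ ∈ [c,d]`, with `0 < a < b < c < d` and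
`Λ = sup_x μ(x)/λ(x)`, the expected local time of any set `A` up to time `t` for the
fast chain is at most the expected local time of `A` up to time `Λt` for the slow chain. -/
theorem local_time_monotone_speed_change
    (E : Type) [Countable E] [TopologicalSpace E] [DiscreteTopology E]
    (p : E → E → ℝ) (hp0 : ∀ x y : E, 0 ≤ p x y) (hp1 : ∀ x : E, HasSum (p x) 1)
    (a b c d : ℝ) (ha : 0 < a) (hab : a < b) (hbc : b < c) (hcd : c < d)
    (lam mu : E → ℝ)
    (hlam : ∀ x : E, lam x ∈ Set.Icc a b) (hmu : ∀ x : E, mu x ∈ Set.Icc c d)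
    (Llam Lmu : (E →ᵇ ℝ) →L[ℝ] (E →ᵇ ℝ))
    (hLlam : ∀ f : E →ᵇ ℝ, ∀ x : E, Llam f x = lam x * ∑' y : E, p x y * (f y - f x))
    (hLmu : ∀ f : E →ᵇ ℝ, ∀ x : E, Lmu f x = mu x * ∑' y : E, p x y * (f y - f x))
    (A : Set E) (χ : E →ᵇ ℝ) (hχ : ∀ x : E, χ x = if x ∈ A then 1 else 0)
    (z : E) (t : ℝ) (ht : 0 ≤ t) :
    (∫ s in (0 : ℝ)..t, expApply Lmu s χ z)
      ≤ ∫ s in (0 : ℝ)..((⨆ x : E, mu x / lam x) * t), expApply Llam s χ z := by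
  haveI : Nonempty E := ⟨z⟩
  set M : ℝ := ⨆ x : E, mu x / lam x with hM
  -- basic facts about rates and M
  have hlam_pos : ∀ x, 0 < lam x := fun x => lt_of_lt_of_le ha (hlam x).1
  have hmu_pos : ∀ x, 0 < mu x := fun x => lt_of_lt_of_le (ha.trans (hab.trans hbc)) (hmu x).1
  have hbddM : BddAbove (Set.range fun x : E => mu x / lam x) := by
    refine ⟨d / a, ?_⟩
    rintro _ ⟨x, rfl⟩
    exact div_le_div₀ (le_of_lt (ha.trans (hab.trans (hbc.trans hcd)))) (hmu x).2 ha (hlam x).1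
  have hMge : ∀ x : E, mu x / lam x ≤ M := fun x => le_ciSup hbddM x
  have hratio_ge_one : ∀ x : E, 1 ≤ mu x / lam x := by
    intro x
    rw [le_div_iff₀ (hlam_pos x), one_mul]
    exact le_trans (hlam x).2 (le_trans hbc.le (hmu x).1)
  have hM1 : 1 ≤ M := le_trans (hratio_ge_one z) (hMge z)
  have hM0 : 0 < M := lt_of_lt_of_le one_pos hM1
  have hχ0 : ∀ x, 0 ≤ χ x := by
    intro x; rw [hχ]; split_ifs <;> norm_num
  have hlam0 : ∀ x, 0 ≤ lam x := fun x => (hlam_pos x).le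
  have hmu0 : ∀ x, 0 ≤ mu x := fun x => (hmu_pos x).le
  have hlamb : ∀ x, lam x ≤ b := fun x => (hlam x).2
  have hmud : ∀ x, mu x ≤ d := fun x => (hmu x).2
  -- the two local-time functions
  set U : ℝ → (E →ᵇ ℝ) := fun s => ∫ r in (0:ℝ)..s, expApply Lmu r χ with hU
  set G : ℝ → (E →ᵇ ℝ) := fun r => ∫ q in (0:ℝ)..r, expApply Llam q χ with hG
  set V : ℝ → (E →ᵇ ℝ) := fun s => G (M * s) with hV
  set W : ℝ → (E →ᵇ ℝ) := fun s => V s - U s with hW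
  -- derivatives
  have hUd : ∀ s : ℝ, HasDerivAt U (expApply Lmu s χ) s := fun s =>
    hasDerivAt_integral_expApply Lmu χ s
  have hGd : ∀ r : ℝ, HasDerivAt G (expApply Llam r χ) r := fun r =>
    hasDerivAt_integral_expApply Llam χ r
  have hVd : ∀ s : ℝ, HasDerivAt V (M • expApply Llam (M * s) χ) s := by
    intro s
    have hmul : HasDerivAt (fun s : ℝ => M * s) M s := by
      simpa using (hasDerivAt_id s).const_mul M
    have := (hGd (M * s)).scomp s hmul
    simpa [Function.comp_def, hV] using this
  have hWd : ∀ s : ℝ, HasDerivAt W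
      (M • expApply Llam (M * s) χ - expApply Lmu s χ) s :=
    fun s => (hVd s).sub (hUd s)
  -- generator identities
  have hLmuU : ∀ s : ℝ, Lmu (U s) = expApply Lmu s χ - χ := fun s =>
    generator_integral_expApply Lmu χ s
  have hLlamV : ∀ s : ℝ, Llam (V s) = expApply Llam (M * s) χ - χ := fun s =>
    generator_integral_expApply Llam χ (M * s)
  have hLmuV : ∀ (s : ℝ) (x : E), Lmu (V s) x = (mu x / lam x) * (Llam (V s) x) := by
    intro s x
    have hl : lam x ≠ 0 := ne_of_gt (hlam_pos x)
    rw [hLmu, hLlam, ← mul_assoc, div_mul_cancel₀ _ hl]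
  -- the inhomogeneity is pointwise nonnegative
  have hQl : ∀ s : ℝ, 0 ≤ s → ∀ x : E, 0 ≤ expApply Llam (M * s) χ x := by
    intro s hs x
    exact expApply_pointwise_nonneg hp0 hp1 hLlam hlam0 hlamb
      (mul_nonneg hM0.le hs) χ hχ0 x
  have hg : ∀ s : ℝ, 0 ≤ s → ∀ x : E,
      0 ≤ ((M • expApply Llam (M * s) χ - expApply Lmu s χ) - Lmu (W s)) x := by
    intro s hs x
    have h1 : Lmu (W s) = Lmu (V s) - Lmu (U s) := by rw [hW]; exact map_sub _ _ _
    have h2 : Lmu (W s) x = (mu x / lam x) * (expApply Llam (M * s) χ x - χ x)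
        - (expApply Lmu s χ x - χ x) := by
      rw [h1, BoundedContinuousFunction.sub_apply, hLmuV s x, hLlamV s, hLmuU s]
      simp [BoundedContinuousFunction.sub_apply]
    have hx1 : 1 ≤ mu x / lam x := hratio_ge_one x
    have hx2 : mu x / lam x ≤ M := hMge x
    have hx3 : 0 ≤ expApply Llam (M * s) χ x := hQl s hs x
    have hexpand : ((M • expApply Llam (M * s) χ - expApply Lmu s χ) - Lmu (W s)) x
        = M * expApply Llam (M * s) χ x - expApply Lmu s χ x - Lmu (W s) x := by
      simp [BoundedContinuousFunction.sub_apply]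
    rw [hexpand, h2]
    nlinarith [hχ0 x]
  -- the comparison function φ
  set φ : ℝ → ℝ := fun s => expApply Lmu (t - s) (W s) z with hφdef
  have hφd : ∀ s : ℝ, HasDerivAt φ
      (expApply Lmu (t - s)
        ((M • expApply Llam (M * s) χ - expApply Lmu s χ) - Lmu (W s)) z) s := by
    intro s
    have h := hasDerivAt_expApply_comp Lmu t (hWd s)
    have h2 := (BoundedContinuousFunction.evalCLM (𝕜 := ℝ) z).hasFDerivAt.comp_hasDerivAt s h
    have h3 : expApply Lmu (t - s)
        ((M • expApply Llam (M * s) χ - expApply Lmu s χ) - Lmu (W s)) z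
        = (BoundedContinuousFunction.evalCLM (𝕜 := ℝ) z)
            (expApply Lmu (t - s) (M • expApply Llam (M * s) χ - expApply Lmu s χ)
              - expApply Lmu (t - s) (Lmu (W s))) := by
      rw [← expApply_map_sub]
      rfl
    rw [hφdef]
    rw [h3]
    exact h2
  -- φ is monotone on [0, t]
  have hφmono : φ 0 ≤ φ t := by
    rcases eq_or_lt_of_le ht with rfl | ht'
    · exact le_refl _
    have hcont : ContinuousOn φ (Set.Icc 0 t) := by
      apply Continuous.continuousOn
      exact Differentiable.continuous (fun s => (hφd s).differentiableAt)
    have hdiff : DifferentiableOn ℝ φ (interior (Set.Icc 0 t)) :=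
      fun s _ => ((hφd s).differentiableAt).differentiableWithinAt
    have hderiv : ∀ s ∈ interior (Set.Icc 0 t), 0 ≤ deriv φ s := by
      intro s hs
      rw [interior_Icc] at hs
      rw [(hφd s).deriv]
      exact expApply_pointwise_nonneg hp0 hp1 hLmu hmu0 hmud
        (by linarith [hs.2] : (0:ℝ) ≤ t - s) _ (hg s hs.1.le) z
    exact monotoneOn_of_deriv_nonneg (convex_Icc 0 t) hcont hdiff hderiv
      (Set.left_mem_Icc.2 ht) (Set.right_mem_Icc.2 ht) ht
  -- endpoints
  have hW0 : W 0 = 0 := by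
    rw [hW, hV, hU, hG]
    simp [intervalIntegral.integral_same]
  have hφ0 : φ 0 = 0 := by
    simp only [hφdef, hW0, sub_zero]
    rw [expApply_map_zero]
    rfl
  have hφt : φ t = W t z := by
    simp only [hφdef]
    rw [sub_self, expApply_zero]
  -- conclusion
  have hWt : 0 ≤ W t z := by rw [← hφt]; linarith [hφmono, hφ0]
  have hUt : U t z = ∫ s in (0:ℝ)..t, expApply Lmu s χ z := by
    rw [hU]
    exact ((BoundedContinuousFunction.evalCLM (𝕜 := ℝ) z).intervalIntegral_comp_comm
      (expApply_intervalIntegrable Lmu χ 0 t)).symm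
  have hVt : V t z = ∫ s in (0:ℝ)..(M * t), expApply Llam s χ z := by
    rw [hV, hG]
    exact ((BoundedContinuousFunction.evalCLM (𝕜 := ℝ) z).intervalIntegral_comp_comm
      (expApply_intervalIntegrable Llam χ 0 (M * t))).symm
  have := hWt
  rw [hW, BoundedContinuousFunction.sub_apply, hUt, hVt] at this
  linarith
end

section
/- Fix α > 0. For all n ∈ ℕ (n ≥ 1), all x, y ∈ ℤ and all t ≥ 0: (e^{t𝒜_n} 𝟙_{{y}})(x) + (e^{t𝒜_n} 𝟙_{{1−y}})(x) = (e^{tΔ} 𝟙_{{y}})(x) + (e^{tΔ} 𝟙_{{1−y}})(x). In probabilistic terms: for the random walk 𝐗 with slow bond generated by 𝒜_n and the simple symmetric random walk X on ℤ jumping at total rate 2 (generator Δ), one has P_x(𝐗_t = y) + P_x(𝐗_t = −y+1) = P_x(X_t = y) + P_x(X_t = −y+1). -/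
open MeasureTheory Filter
open scoped BoundedContinuousFunction NNReal

/-- The exchange rate of the bond `{x, x+1}`: `α/n` at the slow bond `{0,1}`, else `1`. -/
noncomputable def xi (α : ℝ) (n : ℕ) (x : ℤ) : ℝ := if x = 0 then α / n else 1

/-- The slow-bond generator `𝒜_n` acting pointwise on functions `f : ℤ → ℝ`. -/
noncomputable def slowGen (α : ℝ) (n : ℕ) (f : ℤ → ℝ) (x : ℤ) : ℝ :=
  xi α n x * (f (x + 1) - f x) + xi α n (x - 1) * (f (x - 1) - f x)

lemma pow_apply_norm_le {E : Type*} [NormedAddCommGroup E] [NormedSpace ℝ E]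
    (A : E →L[ℝ] E) (f : E) : ∀ k : ℕ, ‖(A ^ k) f‖ ≤ ‖A‖ ^ k * ‖f‖ := by
  intro k
  induction k with
  | zero => simp
  | succ k ih =>
      rw [pow_succ']
      calc ‖A ((A ^ k) f)‖ ≤ ‖A‖ * ‖(A ^ k) f‖ := A.le_opNorm _
        _ ≤ ‖A‖ * (‖A‖ ^ k * ‖f‖) := by
            exact mul_le_mul_of_nonneg_left ih (norm_nonneg A)
        _ = ‖A‖ ^ (k + 1) * ‖f‖ := by ring

lemma summable_expApply {E : Type*} [NormedAddCommGroup E] [NormedSpace ℝ E] [CompleteSpace E]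
    (A : E →L[ℝ] E) (t : ℝ) (f : E) :
    Summable fun k : ℕ => (t ^ k / (k.factorial : ℝ)) • ((A ^ k) f) := by
  apply Summable.of_norm
  have hs := (Real.summable_pow_div_factorial (|t| * ‖A‖)).mul_right ‖f‖
  refine hs.of_nonneg_of_le (fun k => norm_nonneg _) fun k => ?_
  rw [norm_smul]
  have h1 : ‖t ^ k / (k.factorial : ℝ)‖ = |t| ^ k / (k.factorial : ℝ) := by
    rw [Real.norm_eq_abs, abs_div, abs_pow,
      abs_of_nonneg (by positivity : (0:ℝ) ≤ (k.factorial : ℝ))]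
  rw [h1]
  calc |t| ^ k / (k.factorial : ℝ) * ‖(A ^ k) f‖
      ≤ |t| ^ k / (k.factorial : ℝ) * (‖A‖ ^ k * ‖f‖) := by
        apply mul_le_mul_of_nonneg_left (pow_apply_norm_le A f k) (by positivity)
    _ = (|t| * ‖A‖) ^ k / (k.factorial : ℝ) * ‖f‖ := by rw [mul_pow]; ring

lemma expApply_add {E : Type*} [NormedAddCommGroup E] [NormedSpace ℝ E] [CompleteSpace E]
    (A : E →L[ℝ] E) (t : ℝ) (f g : E) :
    expApply A t (f + g) = expApply A t f + expApply A t g := by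
  unfold expApply
  rw [← Summable.tsum_add (summable_expApply A t f) (summable_expApply A t g)]
  congr 1
  ext k
  rw [map_add, smul_add]

/-- **Reflection identity for the slow-bond walk** (Lemma 3.6). For the random walk `𝐗`
with slow bond (generator `𝒜_n`) and the simple symmetric walk `X` on `ℤ` jumping at total
rate `2` (generator the discrete Laplacian), for all `x, y ∈ ℤ` and `t ≥ 0`:
`P_x(𝐗_t = y) + P_x(𝐗_t = 1−y) = P_x(X_t = y) + P_x(X_t = 1−y)`. -/
theorem slow_bond_reflection_identity
    (α : ℝ) (hα : 0 < α) (n : ℕ) (hn : 1 ≤ n)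
    (A Dlap : (ℤ →ᵇ ℝ) →L[ℝ] (ℤ →ᵇ ℝ))
    (hA : ∀ f : ℤ →ᵇ ℝ, ∀ x : ℤ,
      A f x = xi α n x * (f (x + 1) - f x) + xi α n (x - 1) * (f (x - 1) - f x))
    (hDlap : ∀ f : ℤ →ᵇ ℝ, ∀ x : ℤ, Dlap f x = f (x + 1) + f (x - 1) - 2 * f x)
    (x y : ℤ) (t : ℝ) (ht : 0 ≤ t)
    (χy χry : ℤ →ᵇ ℝ)
    (hχy : ∀ z : ℤ, χy z = if z = y then 1 else 0)
    (hχry : ∀ z : ℤ, χry z = if z = 1 - y then 1 else 0) :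
    expApply A t χy x + expApply A t χry x
      = expApply Dlap t χy x + expApply Dlap t χry x := by
  -- symmetry predicate
  set Sym : (ℤ →ᵇ ℝ) → Prop := fun f => ∀ z : ℤ, f z = f (1 - z) with hSym
  -- the Laplacian preserves symmetry
  have hDsym : ∀ f : ℤ →ᵇ ℝ, Sym f → Sym (Dlap f) := by
    intro f hf z
    rw [hDlap, hDlap]
    have h1 : f (1 - z + 1) = f (z - 1) := by
      rw [hf (1 - z + 1)]; congr 1; ring
    have h2 : f (1 - z - 1) = f (z + 1) := by
      rw [hf (1 - z - 1)]; congr 1; ring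
    have h3 : f (1 - z) = f z := (hf z).symm
    rw [h1, h2, h3]; ring
  -- on symmetric functions, A agrees with the Laplacian
  have hAD : ∀ f : ℤ →ᵇ ℝ, Sym f → A f = Dlap f := by
    intro f hf
    have h01 : f 1 = f 0 := by
      have := hf 0; simpa using this.symm
    ext z
    rw [hA, hDlap]
    by_cases hz : z = 0
    · subst hz
      have : (0 : ℤ) - 1 ≠ 0 := by decide
      simp only [xi, if_pos rfl, if_neg this]
      norm_num
      rw [h01]; ring
    · by_cases hz1 : z = 1
      · subst hz1
        have : (1 : ℤ) ≠ 0 := by decide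
        have h0 : (1 : ℤ) - 1 = 0 := by decide
        simp only [xi, if_neg this, h0, if_pos rfl]
        rw [h01]; ring
      · have h1 : z ≠ 0 := hz
        have h2 : z - 1 ≠ 0 := by omega
        simp only [xi, if_neg h1, if_neg h2]
        ring
  -- powers agree on symmetric functions
  have hpow : ∀ f : ℤ →ᵇ ℝ, Sym f → ∀ k : ℕ,
      (A ^ k) f = (Dlap ^ k) f ∧ Sym ((Dlap ^ k) f) := by
    intro f hf k
    induction k with
    | zero => simpa using hf
    | succ k ih =>
        obtain ⟨ih1, ih2⟩ := ih
        constructor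
        · rw [pow_succ', pow_succ', ContinuousLinearMap.mul_apply,
            ContinuousLinearMap.mul_apply, ih1, hAD _ ih2]
        · rw [pow_succ', ContinuousLinearMap.mul_apply]
          exact hDsym _ ih2
  -- the sum χy + χry is symmetric
  have hg : Sym (χy + χry) := by
    intro z
    simp only [BoundedContinuousFunction.coe_add, Pi.add_apply, hχy, hχry]
    have e1 : (1 - z = y) ↔ (z = 1 - y) := by omega
    have e2 : (1 - z = 1 - y) ↔ (z = y) := by omega
    rw [if_congr e1 rfl rfl, if_congr e2 rfl rfl]
    ring
  -- hence the exponentials agree on χy + χry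
  have hexp : expApply A t (χy + χry) = expApply Dlap t (χy + χry) := by
    unfold expApply
    congr 1
    ext k
    rw [(hpow _ hg k).1]
  have hL := expApply_add A t χy χry
  have hR := expApply_add Dlap t χy χry
  have : expApply A t χy + expApply A t χry = expApply Dlap t χy + expApply Dlap t χry := by
    rw [← hL, ← hR, hexp]
  calc expApply A t χy x + expApply A t χry x
      = (expApply A t χy + expApply A t χry) x := rfl
    _ = (expApply Dlap t χy + expApply Dlap t χry) x := by rw [this]
    _ = expApply Dlap t χy x + expApply Dlap t χry x := rfl
end

section
/- For every integer m ≥ 1, the central binomial coefficient satisfies C(2m,m) / 4^m ≤ 1 / √(π m); equivalently, C(2m,m) · √(π m) ≤ 4^m. -/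
open MeasureTheory Filter Topology
open scoped BoundedContinuousFunction NNReal

open Stirling Real in
lemma sqrt_pi_le_stirlingSeq (n : ℕ) : Real.sqrt Real.pi ≤ stirlingSeq (n + 1) := by
  have h := Stirling.stirlingSeq'_antitone
  have ht : Tendsto (stirlingSeq ∘ Nat.succ) atTop (𝓝 (Real.sqrt Real.pi)) :=
    tendsto_stirlingSeq_sqrt_pi.comp (tendsto_add_atTop_nat 1)
  exact h.le_of_tendsto ht n

open Stirling Real in
lemma key_identity (m : ℕ) (hm : 1 ≤ m) :
    (Nat.choose (2 * m) m : ℝ) / 4 ^ m =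
      stirlingSeq (2 * m) / (stirlingSeq m) ^ 2 / Real.sqrt m := by
  have hm0 : (0:ℝ) < (m:ℝ) := by exact_mod_cast hm
  have hfac : ((2*m).factorial : ℝ) = ((2*m).choose m : ℝ) * m.factorial * m.factorial := by
    exact_mod_cast (Nat.choose_mul_factorial_mul_factorial (by omega : m ≤ 2*m)).symm.trans
      (by rw [show 2*m - m = m by omega])
  have hs2 : Real.sqrt (2*(2*m:ℕ):ℝ) = 2 * Real.sqrt m := by
    push_cast
    rw [show (2:ℝ)*(2*m) = 4 * m by ring, Real.sqrt_mul (by norm_num), show (4:ℝ) = 2^2 by norm_num,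
      Real.sqrt_sq (by norm_num)]
  have hsq : (Real.sqrt (2*(m:ℝ)))^2 = 2*m := Real.sq_sqrt (by positivity)
  have hpow : (((2*m:ℕ):ℝ)/Real.exp 1)^(2*m) = 4^m * (((m:ℝ)/Real.exp 1)^m)^2 := by
    push_cast
    rw [mul_div_assoc, mul_pow, show 2*m = m*2 by ring, pow_mul, pow_mul]
    norm_num
    rw [← pow_mul, show m*2 = 2*m by ring, pow_mul]
    norm_num
  have hfpos : (0:ℝ) < (m.factorial : ℝ) := by exact_mod_cast m.factorial_pos
  have hsm : (0:ℝ) < Real.sqrt m := Real.sqrt_pos.mpr hm0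
  have hs2m : (0:ℝ) < Real.sqrt (2*(m:ℝ)) := Real.sqrt_pos.mpr (by positivity)
  have hppos : (0:ℝ) < ((m:ℝ)/Real.exp 1)^m := by positivity
  unfold stirlingSeq
  rw [hs2, hfac, hpow]
  have h2 : Real.sqrt 2 ^ 2 = 2 := Real.sq_sqrt (by norm_num)
  have hm2 : Real.sqrt (m:ℝ) ^ 2 = m := Real.sq_sqrt hm0.le
  field_simp
  ring_nf
  simp only [h2, hm2]
  rw [Real.sq_sqrt (by positivity)]
  ring

/-- **Stirling-type bound for the central binomial coefficient**: for every `m ≥ 1`,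
`C(2m, m)/4^m ≤ 1/√(πm)`. -/
theorem centralBinom_div_four_pow_le (m : ℕ) (hm : 1 ≤ m) :
    (Nat.choose (2 * m) m : ℝ) / 4 ^ m ≤ 1 / Real.sqrt (Real.pi * m) := by
  obtain ⟨k, rfl⟩ : ∃ k, m = k + 1 := ⟨m - 1, by omega⟩
  have hpos : 0 < Stirling.stirlingSeq (k + 1) := Stirling.stirlingSeq'_pos k
  have hπ : Real.sqrt Real.pi ≤ Stirling.stirlingSeq (k + 1) := sqrt_pi_le_stirlingSeq k
  have hπ0 : 0 < Real.sqrt Real.pi := Real.sqrt_pos.mpr Real.pi_pos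
  have hmono : Stirling.stirlingSeq (2 * (k + 1)) ≤ Stirling.stirlingSeq (k + 1) := by
    have := Stirling.stirlingSeq'_antitone (show k ≤ 2 * k + 1 by omega)
    simpa [Function.comp, show 2 * k + 1 + 1 = 2 * (k + 1) by ring] using this
  have hsm : (0:ℝ) < Real.sqrt ((k + 1 : ℕ) : ℝ) := Real.sqrt_pos.mpr (by positivity)
  rw [key_identity _ hm, Real.sqrt_mul Real.pi_pos.le, ← div_div]
  have step : Stirling.stirlingSeq (2 * (k + 1)) / Stirling.stirlingSeq (k + 1) ^ 2 ≤
      1 / Real.sqrt Real.pi := by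
    calc Stirling.stirlingSeq (2 * (k + 1)) / Stirling.stirlingSeq (k + 1) ^ 2
        ≤ Stirling.stirlingSeq (k + 1) / Stirling.stirlingSeq (k + 1) ^ 2 := by gcongr
      _ = 1 / Stirling.stirlingSeq (k + 1) := by field_simp
      _ ≤ 1 / Real.sqrt Real.pi := one_div_le_one_div_of_le hπ0 hπ
  exact div_le_div_of_nonneg_right step hsm.le
end

section
/- Fix α > 0 and let g belong to the class S_α(ℝ). Let T_t^α g be defined for t > 0 by the explicit formulas: T_t^α g(u) = (4πt)^{−1/2} { ∫_ℝ e^{−(u−y)²/(4t)} g_even(y) dy + e^{2αu} ∫_u^{∞} e^{−2αz} ∫_0^{∞} [ ((z−y+4αt)/(2t)) e^{−(z−y)²/(4t)} + ((z+y−4αt)/(2t)) e^{−(z+y)²/(4t)} ] g_odd(y) dy dz } for u > 0, and T_t^α g(u) = (4πt)^{−1/2} { ∫_ℝ e^{−(u−y)²/(4t)} g_even(y) dy − e^{−2αu} ∫_{−u}^{∞} e^{−2αz} ∫_0^{∞} [ ((z−y+4αt)/(2t)) e^{−(z−y)²/(4t)} + ((z+y−4αt)/(2t)) e^{−(z+y)²/(4t)}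 ] g_odd(y) dy dz } for u < 0, where g_even(u) = (g(u)+g(−u))/2 and g_odd(u) = (g(u)−g(−u))/2. Then for every t > 0, the one-sided limits T_t^α g(0⁺), T_t^α g(0⁻), ∂_u T_t^α g(0⁺) and ∂_u T_t^α g(0⁻) exist and satisfy the Robin boundary condition ∂_u T_t^α g(0⁺) = ∂_u T_t^α g(0⁻) = α ( T_t^α g(0⁺) − T_t^α g(0⁻) ). -/
open MeasureTheory Filter
open scoped BoundedContinuousFunction NNReal

/-- `f` belongs to the class `S_α(ℝ)` of test functions: smooth away from the origin,
continuous from the left at `0`, with fast decay of all derivatives, one-sided limits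
of all derivatives at `0`, and satisfying the Robin-type boundary conditions
`f^{(2k+1)}(0⁺) = f^{(2k+1)}(0⁻) = α (f^{(2k)}(0⁺) − f^{(2k)}(0⁻))`. -/
structure IsSAlpha (α : ℝ) (f : ℝ → ℝ) : Prop where
  smooth : ContDiffOn ℝ (⊤ : ℕ∞) f {(0 : ℝ)}ᶜ
  left_cont : Filter.Tendsto f (nhdsWithin 0 (Set.Iio 0)) (nhds (f 0))
  decay : ∀ k ℓ : ℕ, ∃ M : ℝ, ∀ u : ℝ, u ≠ 0 → (1 + |u| ^ ℓ) * |iteratedDeriv k f u| ≤ M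
  robin : ∀ k : ℕ, ∃ Lp Lm Dp Dm : ℝ,
    Filter.Tendsto (iteratedDeriv (2 * k) f) (nhdsWithin 0 (Set.Ioi 0)) (nhds Lp) ∧
    Filter.Tendsto (iteratedDeriv (2 * k) f) (nhdsWithin 0 (Set.Iio 0)) (nhds Lm) ∧
    Filter.Tendsto (iteratedDeriv (2 * k + 1) f) (nhdsWithin 0 (Set.Ioi 0)) (nhds Dp) ∧
    Filter.Tendsto (iteratedDeriv (2 * k + 1) f) (nhdsWithin 0 (Set.Iio 0)) (nhds Dm) ∧
    Dp = α * (Lp - Lm) ∧ Dm = α * (Lp - Lm)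

/-- The explicit semigroup `T_t^α` associated with the heat equation with Robin boundary
condition at `0`, given by the formulas of Proposition 2.3. -/
noncomputable def Talpha (α : ℝ) (g : ℝ → ℝ) (t u : ℝ) : ℝ :=
  (Real.sqrt (4 * Real.pi * t))⁻¹ *
    ((∫ y : ℝ, Real.exp (-((u - y) ^ 2) / (4 * t)) * ((g y + g (-y)) / 2)) +
      if 0 < u then
        Real.exp (2 * α * u) *
          ∫ z in Set.Ioi u, Real.exp (-(2 * α * z)) *
            ∫ y in Set.Ioi (0 : ℝ),
              (((z - y + 4 * α * t) / (2 * t)) * Real.exp (-((z - y) ^ 2) / (4 * t)) +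
                ((z + y - 4 * α * t) / (2 * t)) * Real.exp (-((z + y) ^ 2) / (4 * t))) *
                ((g y - g (-y)) / 2)
      else
        -(Real.exp (-(2 * α * u)) *
          ∫ z in Set.Ioi (-u), Real.exp (-(2 * α * z)) *
            ∫ y in Set.Ioi (0 : ℝ),
              (((z - y + 4 * α * t) / (2 * t)) * Real.exp (-((z - y) ^ 2) / (4 * t)) +
                ((z + y - 4 * α * t) / (2 * t)) * Real.exp (-((z + y) ^ 2) / (4 * t))) *
                ((g y - g (-y)) / 2)))

open MeasureTheory Filter Set

namespace TalphaAux

lemma aux_exp_bound {b : ℝ} (hb : 0 < b) (x : ℝ) :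
    |x| * Real.exp (-(b * x ^ 2)) ≤ (2 * Real.sqrt b)⁻¹ := by
  have hsb : 0 < Real.sqrt b := Real.sqrt_pos.2 hb
  have hsq : Real.sqrt b ^ 2 = b := Real.sq_sqrt hb.le
  have h1 : 1 + b * x ^ 2 ≤ Real.exp (b * x ^ 2) := by
    have := Real.add_one_le_exp (b * x ^ 2); linarith
  have hpos : (0:ℝ) < 1 + b * x ^ 2 := by positivity
  have hexp : Real.exp (-(b * x ^ 2)) ≤ (1 + b * x ^ 2)⁻¹ := by
    rw [Real.exp_neg]
    exact inv_anti₀ hpos h1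
  have h2 : |x| * Real.exp (-(b * x ^ 2)) ≤ |x| * (1 + b * x ^ 2)⁻¹ :=
    mul_le_mul_of_nonneg_left hexp (abs_nonneg x)
  refine h2.trans ?_
  rw [← div_eq_mul_inv, ← one_div, div_le_div_iff₀ hpos (by positivity)]
  nlinarith [sq_nonneg (1 - Real.sqrt b * |x|), sq_abs x]

/-- the basic gaussian pointwise bound `|x| e^{-x²/(4t)} ≤ √t`. -/
lemma gauss_abs_le {t : ℝ} (ht : 0 < t) (x : ℝ) :
    |x| * Real.exp (-x ^ 2 / (4 * t)) ≤ Real.sqrt t := by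
  have h : -x ^ 2 / (4 * t) = -((4 * t)⁻¹ * x ^ 2) := by ring
  rw [h]
  refine (aux_exp_bound (b := (4 * t)⁻¹) (by positivity) x).trans_eq ?_
  have h4 : Real.sqrt (4 * t) = 2 * Real.sqrt t := by
    rw [show (4:ℝ) * t = 2 ^ 2 * t by ring, Real.sqrt_mul (by positivity), Real.sqrt_sq (by norm_num)]
  rw [Real.sqrt_inv, h4]
  have hst : 0 < Real.sqrt t := Real.sqrt_pos.2 ht
  field_simp

lemma gauss_exp_le_one {t : ℝ} (ht : 0 < t) (x : ℝ) :
    Real.exp (-x ^ 2 / (4 * t)) ≤ 1 := by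
  rw [← Real.exp_zero]
  apply Real.exp_le_exp.2
  apply div_nonpos_of_nonpos_of_nonneg (neg_nonpos.2 (sq_nonneg _)) (by positivity)

noncomputable def Afun (t : ℝ) (φ : ℝ → ℝ) (u : ℝ) : ℝ :=
  ∫ y : ℝ, Real.exp (-((u - y) ^ 2) / (4 * t)) * φ y

noncomputable def Afun' (t : ℝ) (φ : ℝ → ℝ) (u : ℝ) : ℝ :=
  ∫ y : ℝ, ((y - u) / (2 * t)) * Real.exp (-((u - y) ^ 2) / (4 * t)) * φ y

variable {t : ℝ} {φ : ℝ → ℝ}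

lemma abs_kernel'_le (ht : 0 < t) (u y : ℝ) :
    |((y - u) / (2 * t)) * Real.exp (-((u - y) ^ 2) / (4 * t))| ≤ Real.sqrt t / (2 * t) := by
  have h := gauss_abs_le ht (y - u)
  rw [show -(y-u)^2 / (4*t) = -((u-y)^2) / (4*t) by ring] at h
  have hexp : 0 < Real.exp (-((u - y) ^ 2) / (4 * t)) := Real.exp_pos _
  rw [abs_mul, abs_div, abs_of_pos (by positivity : (0:ℝ) < 2*t), abs_of_pos hexp,
    div_mul_eq_mul_div, div_le_div_iff₀ (by positivity) (by positivity)]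
  exact mul_le_mul_of_nonneg_right h (by positivity)

lemma integrable_kernel_mul (ht : 0 < t) (hφ : Integrable φ) (u : ℝ) :
    Integrable fun y => Real.exp (-((u - y) ^ 2) / (4 * t)) * φ y := by
  apply hφ.mono (((by fun_prop : Continuous fun y : ℝ =>
    Real.exp (-((u - y) ^ 2) / (4 * t))).aestronglyMeasurable.mul hφ.1))
  filter_upwards with y
  simp only [Pi.mul_apply] -- just in case
  rw [Real.norm_eq_abs, Real.norm_eq_abs, abs_mul, abs_of_pos (Real.exp_pos _)]
  calc Real.exp (-(u - y) ^ 2 / (4 * t)) * |φ y| ≤ 1 * |φ y| :=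
        mul_le_mul_of_nonneg_right (gauss_exp_le_one ht _) (abs_nonneg _)
    _ = |φ y| := one_mul _

lemma integrable_kernel'_mul (ht : 0 < t) (hφ : Integrable φ) (u : ℝ) :
    Integrable fun y => ((y - u) / (2 * t)) * Real.exp (-((u - y) ^ 2) / (4 * t)) * φ y := by
  apply (hφ.const_mul (Real.sqrt t / (2 * t))).mono
    (((by fun_prop : Continuous fun y : ℝ =>
      ((y - u) / (2 * t)) * Real.exp (-((u - y) ^ 2) / (4 * t))).aestronglyMeasurable.mul hφ.1))
  filter_upwards with y
  simp only [Pi.mul_apply]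
  rw [Real.norm_eq_abs, Real.norm_eq_abs, abs_mul _ (φ y), abs_mul _ (φ y),
    abs_of_nonneg (by positivity : (0:ℝ) ≤ Real.sqrt t / (2 * t))]
  exact mul_le_mul_of_nonneg_right (abs_kernel'_le ht u y) (abs_nonneg _)

lemma hasDerivAt_Afun (ht : 0 < t) (hφ : Integrable φ) (u : ℝ) :
    HasDerivAt (Afun t φ) (Afun' t φ u) u := by
  have key := hasDerivAt_integral_of_dominated_loc_of_deriv_le (μ := volume)
    (F := fun u y => Real.exp (-((u - y) ^ 2) / (4 * t)) * φ y)
    (F' := fun u y => ((y - u) / (2 * t)) * Real.exp (-((u - y) ^ 2) / (4 * t)) * φ y)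
    (x₀ := u) (bound := fun y => Real.sqrt t / (2 * t) * |φ y|)
    (s := Metric.ball u 1) (Metric.ball_mem_nhds u one_pos)
    (Eventually.of_forall fun x => ((by fun_prop : Continuous fun y : ℝ =>
      Real.exp (-((x - y) ^ 2) / (4 * t))).aestronglyMeasurable.mul hφ.1))
    (integrable_kernel_mul ht hφ u)
    (((by fun_prop : Continuous fun y : ℝ =>
      ((y - u) / (2 * t)) * Real.exp (-((u - y) ^ 2) / (4 * t))).aestronglyMeasurable.mul hφ.1))
    ?_ ((hφ.norm.const_mul _)) ?_
  · exact key.2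
  · filter_upwards with y x _
    rw [Real.norm_eq_abs, abs_mul]
    exact mul_le_mul_of_nonneg_right (abs_kernel'_le ht x y) (abs_nonneg _)
  · filter_upwards with y x _
    have h1 : HasDerivAt (fun x : ℝ => -((x - y) ^ 2) / (4 * t)) ((y - x) / (2 * t)) x := by
      have := (((hasDerivAt_id x).sub_const y).pow 2).neg.div_const (4 * t)
      refine this.congr_deriv ?_
      rw [show (2:ℕ) - 1 = 1 from rfl, pow_one, id_eq]
      push_cast
      ring
    have := (h1.exp.mul_const (φ y))
    exact this.congr_deriv (by ring)

lemma continuous_Afun' (ht : 0 < t) (hφ : Integrable φ) : Continuous (Afun' t φ) := by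
  rw [continuous_iff_continuousAt]
  intro u
  unfold ContinuousAt Afun'
  apply tendsto_integral_filter_of_dominated_convergence
    (bound := fun y => Real.sqrt t / (2 * t) * |φ y|)
  · exact Eventually.of_forall fun x => ((by fun_prop : Continuous fun y : ℝ =>
      ((y - x) / (2 * t)) * Real.exp (-((x - y) ^ 2) / (4 * t))).aestronglyMeasurable.mul hφ.1)
  · filter_upwards with x
    filter_upwards with y
    rw [Real.norm_eq_abs, abs_mul]
    exact mul_le_mul_of_nonneg_right (abs_kernel'_le ht x y) (abs_nonneg _)
  · exact hφ.norm.const_mul _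
  · filter_upwards with y
    exact ((by fun_prop : Continuous fun x : ℝ =>
      ((y - x) / (2 * t)) * Real.exp (-((x - y) ^ 2) / (4 * t)) * φ y)).continuousAt

lemma Afun'_zero_of_even (ht : 0 < t) (hφ : Integrable φ) (heven : ∀ y, φ (-y) = φ y) :
    Afun' t φ 0 = 0 := by
  have hodd : ∀ y : ℝ, ((-y - 0) / (2 * t)) * Real.exp (-((0 - -y) ^ 2) / (4 * t)) * φ (-y)
      = -(((y - 0) / (2 * t)) * Real.exp (-((0 - y) ^ 2) / (4 * t)) * φ y) := by
    intro y
    rw [heven, show (0 - -y : ℝ)^2 = (0 - y)^2 by ring]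
    ring
  have h1 : Afun' t φ 0 =
      ∫ y : ℝ, ((-y - 0) / (2 * t)) * Real.exp (-((0 - -y) ^ 2) / (4 * t)) * φ (-y) := by
    unfold Afun'
    exact (integral_neg_eq_self _ _).symm
  have h3 : (∫ y : ℝ, ((-y - 0) / (2 * t)) * Real.exp (-((0 - -y) ^ 2) / (4 * t)) * φ (-y))
      = - Afun' t φ 0 := by
    unfold Afun'
    rw [← integral_neg]
    exact integral_congr_ae (Eventually.of_forall fun y => hodd y)
  have h2 := h1.trans h3
  linarith


noncomputable def kk (α t z y : ℝ) : ℝ :=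
  ((z - y + 4 * α * t) / (2 * t)) * Real.exp (-((z - y) ^ 2) / (4 * t)) +
    ((z + y - 4 * α * t) / (2 * t)) * Real.exp (-((z + y) ^ 2) / (4 * t))

noncomputable def Hfun (α t : ℝ) (ψ : ℝ → ℝ) (z : ℝ) : ℝ :=
  ∫ y in Ioi (0:ℝ), kk α t z y * ψ y

lemma term_abs_le (ht : 0 < t) (x c : ℝ) :
    |((x + c) / (2 * t)) * Real.exp (-x ^ 2 / (4 * t))| ≤ (Real.sqrt t + |c|) / (2 * t) := by
  rw [abs_mul, abs_div, abs_of_pos (show (0:ℝ) < 2*t by positivity), abs_of_pos (Real.exp_pos _),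
    div_mul_eq_mul_div, div_le_div_iff₀ (by positivity) (by positivity)]
  have h1 : |x + c| ≤ |x| + |c| := abs_add_le x c
  have h2 := gauss_abs_le ht x
  have h3 := gauss_exp_le_one ht x
  have he : 0 ≤ Real.exp (-x ^ 2 / (4 * t)) := (Real.exp_pos _).le
  have h4 : |x + c| * Real.exp (-x ^ 2 / (4 * t)) ≤
      (|x| + |c|) * Real.exp (-x ^ 2 / (4 * t)) := mul_le_mul_of_nonneg_right h1 he
  have h5 : |c| * Real.exp (-x ^ 2 / (4 * t)) ≤ |c| := by
    calc |c| * Real.exp (-x ^ 2 / (4 * t)) ≤ |c| * 1 := mul_le_mul_of_nonneg_left h3 (abs_nonneg c)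
      _ = |c| := mul_one _
  nlinarith

variable {α : ℝ} {ψ : ℝ → ℝ}

lemma kk_abs_le (ht : 0 < t) (z y : ℝ) :
    |kk α t z y| ≤ (Real.sqrt t + |4 * α * t|) / t := by
  have h1 := term_abs_le ht (z - y) (4 * α * t)
  have h2 : |((z + y - 4 * α * t) / (2 * t)) * Real.exp (-((z + y) ^ 2) / (4 * t))| ≤
      (Real.sqrt t + |4 * α * t|) / (2 * t) := by
    rw [show z + y - 4 * α * t = z + y + -(4 * α * t) by ring]
    simpa using term_abs_le ht (z + y) (-(4 * α * t))
  refine (abs_add_le _ _).trans ?_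
  have h3 : (Real.sqrt t + |4 * α * t|) / (2 * t) + (Real.sqrt t + |4 * α * t|) / (2 * t)
      = (Real.sqrt t + |4 * α * t|) / t := by
    field_simp
    ring
  linarith

lemma kk_cont_y (α t z : ℝ) : Continuous fun y : ℝ => kk α t z y := by
  unfold kk; fun_prop

lemma kk_cont_z (α t y : ℝ) : Continuous fun z : ℝ => kk α t z y := by
  unfold kk; fun_prop

lemma continuous_Hfun (ht : 0 < t) (hψ : IntegrableOn ψ (Ioi (0:ℝ))) :
    Continuous (Hfun α t ψ) := by
  rw [continuous_iff_continuousAt]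
  intro z
  unfold ContinuousAt Hfun
  apply tendsto_integral_filter_of_dominated_convergence
    (bound := fun y => (Real.sqrt t + |4 * α * t|) / t * |ψ y|)
  · exact Eventually.of_forall fun x =>
      ((kk_cont_y α t x).aestronglyMeasurable.mul hψ.1)
  · filter_upwards with x
    filter_upwards with y
    rw [Real.norm_eq_abs, abs_mul]
    exact mul_le_mul_of_nonneg_right (kk_abs_le ht x y) (abs_nonneg _)
  · exact hψ.norm.const_mul _
  · filter_upwards with y
    exact ((kk_cont_z α t y).mul continuous_const).continuousAt

lemma Hfun_zero (ht : 0 < t) : Hfun α t ψ 0 = 0 := by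
  have hk : ∀ y : ℝ, kk α t 0 y = 0 := by
    intro y
    unfold kk
    rw [show ((0:ℝ) - y) ^ 2 = ((0:ℝ) + y) ^ 2 by ring]
    ring
  unfold Hfun
  rw [integral_congr_ae (Eventually.of_forall fun y => by rw [hk y, zero_mul])]
  exact integral_zero _ _

lemma Hfun_abs_le (ht : 0 < t) (hψ : IntegrableOn ψ (Ioi (0:ℝ))) (z : ℝ) :
    |Hfun α t ψ z| ≤ ∫ y in Ioi (0:ℝ), (Real.sqrt t + |4 * α * t|) / t * |ψ y| := by
  rw [← Real.norm_eq_abs]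
  apply norm_integral_le_of_norm_le (hψ.norm.const_mul _)
  filter_upwards with y
  rw [Real.norm_eq_abs, abs_mul]
  exact mul_le_mul_of_nonneg_right (kk_abs_le ht z y) (abs_nonneg _)

lemma integral_Ioi_split {f : ℝ → ℝ} (hf : IntegrableOn f (Ioi (0:ℝ))) {v : ℝ} (hv : 0 ≤ v) :
    ∫ z in Ioi v, f z = (∫ z in Ioi (0:ℝ), f z) - ∫ z in (0:ℝ)..v, f z := by
  have hu : Ioc 0 v ∪ Ioi v = Ioi (0:ℝ) := Ioc_union_Ioi_eq_Ioi hv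
  have h1 : ∫ z in Ioi (0:ℝ), f z = (∫ z in Ioc (0:ℝ) v, f z) + ∫ z in Ioi v, f z := by
    rw [← hu]
    exact setIntegral_union (Ioc_disjoint_Ioi le_rfl) measurableSet_Ioi
      (hf.mono_set (by rw [← hu]; exact subset_union_left))
      (hf.mono_set (by rw [← hu]; exact subset_union_right))
  rw [intervalIntegral.integral_of_le hv]
  linarith

end TalphaAux



/-- **`T_t^α g` satisfies the Robin boundary condition at the origin** (part of
Proposition 2.3): for `g ∈ S_α(ℝ)` and `t > 0`, the one-sided limits `T_t^α g(0⁺)`,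
`T_t^α g(0⁻)`, `∂_u T_t^α g(0⁺)` and `∂_u T_t^α g(0⁻)` exist and satisfy
`∂_u T_t^α g(0⁺) = ∂_u T_t^α g(0⁻) = α (T_t^α g(0⁺) − T_t^α g(0⁻))`. -/
theorem Talpha_robin_boundary_condition
    (α : ℝ) (hα : 0 < α) (g : ℝ → ℝ) (hg : IsSAlpha α g) :
    ∀ t : ℝ, 0 < t → ∃ Lp Lm d : ℝ,
      Filter.Tendsto (fun u => Talpha α g t u) (nhdsWithin 0 (Set.Ioi 0)) (nhds Lp) ∧
      Filter.Tendsto (fun u => Talpha α g t u) (nhdsWithin 0 (Set.Iio 0)) (nhds Lm) ∧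
      Filter.Tendsto (deriv (fun u => Talpha α g t u)) (nhdsWithin 0 (Set.Ioi 0)) (nhds d) ∧
      Filter.Tendsto (deriv (fun u => Talpha α g t u)) (nhdsWithin 0 (Set.Iio 0)) (nhds d) ∧
      d = α * (Lp - Lm) := by
  intro t ht
  -- integrability of `g`
  obtain ⟨M, hM⟩ := hg.decay 0 2
  have hM' : ∀ u : ℝ, u ≠ 0 → (1 + |u| ^ 2) * |g u| ≤ M := by
    simpa [iteratedDeriv_zero] using hM
  have hae : ∀ᵐ u : ℝ, u ≠ 0 := by
    rw [ae_iff]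
    simp only [not_not, Set.setOf_eq_eq_singleton]
    exact Real.volume_singleton
  have hgm : AEStronglyMeasurable g (volume : Measure ℝ) := by
    have h1 : ContinuousOn g {(0:ℝ)}ᶜ := hg.smooth.continuousOn
    have h2 := h1.aestronglyMeasurable (μ := (volume : Measure ℝ))
      (measurableSet_singleton (0:ℝ)).compl
    rwa [Measure.restrict_eq_self_of_ae_mem
      (by filter_upwards [hae] with u hu using hu : ∀ᵐ u : ℝ, u ∈ ({(0:ℝ)}ᶜ : Set ℝ))] at h2
  have hM0 : (0:ℝ) ≤ M := le_trans (by positivity) (hM' 1 one_ne_zero)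
  have hgint : Integrable g (volume : Measure ℝ) := by
    apply (integrable_inv_one_add_sq.const_mul M).mono hgm
    filter_upwards [hae] with u hu
    have h3 := hM' u hu
    have h4 : (0:ℝ) < 1 + u ^ 2 := by positivity
    rw [Real.norm_eq_abs, Real.norm_eq_abs, abs_mul, abs_of_nonneg hM0,
      abs_of_pos (by positivity : (0:ℝ) < (1 + u^2)⁻¹)]
    rw [sq_abs] at h3
    rw [show M * (1 + u ^ 2)⁻¹ = M / (1 + u ^ 2) by ring, le_div_iff₀ h4]
    nlinarith
  have hgneg : Integrable (fun y => g (-y)) (volume : Measure ℝ) := hgint.comp_neg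
  set gE : ℝ → ℝ := fun y => (g y + g (-y)) / 2 with hgEdef
  set gO : ℝ → ℝ := fun y => (g y - g (-y)) / 2 with hgOdef
  have hgEint : Integrable gE := (hgint.add hgneg).div_const 2
  have hgOint : Integrable gO := (hgint.sub hgneg).div_const 2
  have hgEeven : ∀ y, gE (-y) = gE y := by
    intro y
    rw [hgEdef]
    simp only [neg_neg]
    ring
  have hψ : IntegrableOn gO (Set.Ioi (0:ℝ)) := hgOint.integrableOn
  -- the functions H, φz, G, F0
  have hHcont : Continuous (TalphaAux.Hfun α t gO) := TalphaAux.continuous_Hfun ht hψ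
  set MH : ℝ := ∫ y in Set.Ioi (0:ℝ), (Real.sqrt t + |4 * α * t|) / t * |gO y| with hMHdef
  set φz : ℝ → ℝ := fun z => Real.exp (-(2 * α * z)) * TalphaAux.Hfun α t gO z with hφzdef
  have hφzc : Continuous φz := by
    rw [hφzdef]
    exact (Real.continuous_exp.comp (by fun_prop)).mul hHcont
  have hMH0 : 0 ≤ MH := by
    rw [hMHdef]
    apply integral_nonneg
    intro y
    positivity
  have hφzint : IntegrableOn φz (Set.Ioi (0:ℝ)) := by
    apply Integrable.mono (g := fun z => MH * Real.exp (-(2 * α) * z))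
    · exact (exp_neg_integrableOn_Ioi 0 (by linarith : (0:ℝ) < 2 * α)).const_mul MH
    · exact (hφzc.aestronglyMeasurable).restrict
    · filter_upwards with z
      rw [hφzdef]
      simp only [Real.norm_eq_abs]
      rw [abs_mul, abs_of_pos (Real.exp_pos _), abs_mul, abs_of_nonneg hMH0,
        abs_of_pos (Real.exp_pos _), show -(2 * α) * z = -(2 * α * z) by ring]
      rw [mul_comm (MH) _]
      exact mul_le_mul_of_nonneg_left
        ((TalphaAux.Hfun_abs_le ht hψ z).trans_eq hMHdef.symm) (Real.exp_pos _).le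
  set F0 : ℝ := ∫ z in Set.Ioi (0:ℝ), φz z with hF0def
  set G : ℝ → ℝ := fun v => ∫ z in (0:ℝ)..v, φz z with hGdef
  have hGd : ∀ v : ℝ, HasDerivAt G (φz v) v := by
    intro v
    rw [hGdef]
    exact intervalIntegral.integral_hasDerivAt_right (hφzc.intervalIntegrable 0 v)
      (hφzc.stronglyMeasurableAtFilter _ _) hφzc.continuousAt
  have hGc : Continuous G := by
    rw [continuous_iff_continuousAt]; exact fun v => (hGd v).continuousAt
  have hG0 : G 0 = 0 := by rw [hGdef]; exact intervalIntegral.integral_same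
  have hsplit : ∀ v : ℝ, 0 ≤ v → ∫ z in Set.Ioi v, φz z = F0 - G v := by
    intro v hv
    rw [hGdef, hF0def]
    exact TalphaAux.integral_Ioi_split hφzint hv
  have hφz0 : φz 0 = 0 := by
    rw [hφzdef]
    simp [TalphaAux.Hfun_zero (α := α) (ψ := gO) ht]
  -- the function A
  set A : ℝ → ℝ := TalphaAux.Afun t gE with hAdef
  set A' : ℝ → ℝ := TalphaAux.Afun' t gE with hA'def
  have hA : ∀ u : ℝ, HasDerivAt A (A' u) u := fun u => TalphaAux.hasDerivAt_Afun ht hgEint u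
  have hA'c : Continuous A' := TalphaAux.continuous_Afun' ht hgEint
  have hA'0 : A' 0 = 0 := TalphaAux.Afun'_zero_of_even ht hgEint hgEeven
  set C : ℝ := (Real.sqrt (4 * Real.pi * t))⁻¹ with hCdef
  set P : ℝ → ℝ := fun u => C * (A u + Real.exp (2 * α * u) * (F0 - G u)) with hPdef
  set Q : ℝ → ℝ := fun u => C * (A u - Real.exp (-(2 * α * u)) * (F0 - G (-u))) with hQdef
  -- identification of Talpha with P and Q
  have hTP : ∀ u ∈ Set.Ioi (0:ℝ), Talpha α g t u = P u := by
    intro u hu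
    have hu' : (0:ℝ) < u := hu
    have h1 : Talpha α g t u = C * (A u + Real.exp (2 * α * u) * ∫ z in Set.Ioi u, φz z) := by
      unfold Talpha
      rw [if_pos hu']
      rfl
    rw [h1, hsplit u hu'.le, hPdef]
  have hTQ : ∀ u ∈ Set.Iio (0:ℝ), Talpha α g t u = Q u := by
    intro u hu
    have hu' : u < 0 := hu
    have h1 : Talpha α g t u
        = C * (A u + -(Real.exp (-(2 * α * u)) * ∫ z in Set.Ioi (-u), φz z)) := by
      unfold Talpha
      rw [if_neg (by linarith)]
      rfl
    rw [h1, hsplit (-u) (by linarith), hQdef]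
    ring
  -- derivatives of P and Q
  set p' : ℝ → ℝ := fun u => C * (A' u +
    (Real.exp (2 * α * u) * (2 * α) * (F0 - G u) + Real.exp (2 * α * u) * (0 - φz u)))
    with hp'def
  set q' : ℝ → ℝ := fun u => C * (A' u -
    (Real.exp (-(2 * α * u)) * (-(2 * α)) * (F0 - G (-u)) +
      Real.exp (-(2 * α * u)) * (0 - φz (-u) * (-1)))) with hq'def
  have hEp : ∀ u : ℝ, HasDerivAt (fun u : ℝ => Real.exp (2 * α * u))
      (Real.exp (2 * α * u) * (2 * α)) u := by
    intro u
    have h : HasDerivAt (fun u : ℝ => 2 * α * u) (2 * α) u := by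
      simpa using (hasDerivAt_id u).const_mul (2 * α)
    exact h.exp
  have hEm : ∀ u : ℝ, HasDerivAt (fun u : ℝ => Real.exp (-(2 * α * u)))
      (Real.exp (-(2 * α * u)) * (-(2 * α))) u := by
    intro u
    have h : HasDerivAt (fun u : ℝ => -(2 * α * u)) (-(2 * α)) u := by
      have := ((hasDerivAt_id u).const_mul (2 * α)).neg
      simp only [mul_one] at this
      exact this
    exact h.exp
  have hGm : ∀ u : ℝ, HasDerivAt (fun u : ℝ => G (-u)) (φz (-u) * (-1)) u := by
    intro u
    have := (hGd (-u)).comp u (hasDerivAt_neg' u)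
    exact this
  have hP : ∀ u : ℝ, HasDerivAt P (p' u) u := by
    intro u
    rw [hPdef, hp'def]
    exact ((hA u).add ((hEp u).mul ((hasDerivAt_const u F0).sub (hGd u)))).const_mul C
  have hQ : ∀ u : ℝ, HasDerivAt Q (q' u) u := by
    intro u
    rw [hQdef, hq'def]
    exact ((hA u).sub ((hEm u).mul ((hasDerivAt_const u F0).sub (hGm u)))).const_mul C
  have hp'c : Continuous p' := by
    rw [hp'def]
    apply continuous_const.mul
    apply hA'c.add
    apply Continuous.add
    · exact ((Real.continuous_exp.comp (by fun_prop)).mul continuous_const).mul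
        (continuous_const.sub hGc)
    · exact (Real.continuous_exp.comp (by fun_prop)).mul (continuous_const.sub hφzc)
  have hq'c : Continuous q' := by
    rw [hq'def]
    apply continuous_const.mul
    apply hA'c.sub
    apply Continuous.add
    · exact ((Real.continuous_exp.comp (by fun_prop)).mul continuous_const).mul
        (continuous_const.sub (hGc.comp continuous_neg))
    · exact (Real.continuous_exp.comp (by fun_prop)).mul
        (continuous_const.sub ((hφzc.comp continuous_neg).mul continuous_const))
  -- values at 0
  have hP0 : P 0 = C * (A 0 + F0) := by
    rw [hPdef]; simp [hG0]
  have hQ0 : Q 0 = C * (A 0 - F0) := by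
    rw [hQdef]; simp [hG0]
  have hp'0 : p' 0 = α * (P 0 - Q 0) := by
    rw [hp'def, hP0, hQ0]
    simp only [mul_zero, Real.exp_zero, neg_zero, hG0, hφz0, hA'0]
    ring
  have hq'0 : q' 0 = α * (P 0 - Q 0) := by
    rw [hq'def, hP0, hQ0]
    simp only [mul_zero, Real.exp_zero, neg_zero, hG0, hφz0, hA'0]
    ring
  -- deriv of Talpha agrees with p' on Ioi 0 and q' on Iio 0
  have hDP : ∀ u ∈ Set.Ioi (0:ℝ), deriv (fun u => Talpha α g t u) u = p' u := by
    intro u hu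
    have hev : (fun u => Talpha α g t u) =ᶠ[nhds u] P := by
      filter_upwards [isOpen_Ioi.mem_nhds hu] with v hv using hTP v hv
    rw [hev.deriv_eq, (hP u).deriv]
  have hDQ : ∀ u ∈ Set.Iio (0:ℝ), deriv (fun u => Talpha α g t u) u = q' u := by
    intro u hu
    have hev : (fun u => Talpha α g t u) =ᶠ[nhds u] Q := by
      filter_upwards [isOpen_Iio.mem_nhds hu] with v hv using hTQ v hv
    rw [hev.deriv_eq, (hQ u).deriv]
  refine ⟨P 0, Q 0, α * (P 0 - Q 0), ?_, ?_, ?_, ?_, rfl⟩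
  · refine Tendsto.congr' ?_ (((hP 0).continuousAt.continuousWithinAt) :
      Tendsto P (nhdsWithin 0 (Set.Ioi 0)) (nhds (P 0)))
    filter_upwards [eventually_mem_nhdsWithin] with u hu using (hTP u hu).symm
  · refine Tendsto.congr' ?_ (((hQ 0).continuousAt.continuousWithinAt) :
      Tendsto Q (nhdsWithin 0 (Set.Iio 0)) (nhds (Q 0)))
    filter_upwards [eventually_mem_nhdsWithin] with u hu using (hTQ u hu).symm
  · have h1 : Tendsto p' (nhdsWithin 0 (Set.Ioi 0)) (nhds (α * (P 0 - Q 0))) := by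
      rw [← hp'0]
      exact (hp'c.tendsto 0).mono_left nhdsWithin_le_nhds
    refine Tendsto.congr' ?_ h1
    filter_upwards [eventually_mem_nhdsWithin] with u hu using (hDP u hu).symm
  · have h1 : Tendsto q' (nhdsWithin 0 (Set.Iio 0)) (nhds (α * (P 0 - Q 0))) := by
      rw [← hq'0]
      exact (hq'c.tendsto 0).mono_left nhdsWithin_le_nhds
    refine Tendsto.congr' ?_ h1
    filter_upwards [eventually_mem_nhdsWithin] with u hu using (hDQ u hu).symm
end
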